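/- For every λ-critical boolean function f : {0,1}^n → {0,1}, every p ∈ [0,1], and the p-random restriction R_p: E_{ρ∼R_p}[|supp(ρ)| + D(f|_ρ)] ≤ n(1−p) + Σ_{t=1}^{n} (pλ)^t. In particular, if pλ < 1, then D_ave(f) ≤ n(1−p) + pλ/(1−pλ). -/

import Mathlib

/-- Decision trees over `n` boolean variables. -/
inductive DTree (n : ℕ) : Type where
  | leaf : Bool → DTree n
  | node : Fin n → DTree n → DTree n → DTree n

namespace DTree

/-- Evaluate a decision tree on an input. -/
def eval {n : ℕ} : DTree n → (Fin n → Bool) → Bool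
  | leaf b, _ => b
  | node i t0 t1, x => if x i then eval t1 x else eval t0 x

/-- Number of queries made on input `x`. -/
def cost {n : ℕ} : DTree n → (Fin n → Bool) → ℕ
  | leaf _, _ => 0
  | node i t0 t1, x => 1 + (if x i then cost t1 x else cost t0 x)

/-- Depth of a decision tree. -/
def depth {n : ℕ} : DTree n → ℕ
  | leaf _ => 0
  | node _ t0 t1 => 1 + max (depth t0) (depth t1)

end DTree

/-- `T` computes `f` with zero error. -/
def Computes {n : ℕ} (T : DTree n) (f : (Fin n → Bool) → Bool) : Prop :=
  ∀ x, T.eval x = f x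

/-- Average cost of a decision tree under the uniform distribution. -/
noncomputable def avgCost {n : ℕ} (T : DTree n) : ℝ :=
  (∑ x : Fin n → Bool, (T.cost x : ℝ)) / 2 ^ n

/-- Average-case deterministic query complexity under the uniform distribution. -/
noncomputable def Dave {n : ℕ} (f : (Fin n → Bool) → Bool) : ℝ :=
  sInf {c : ℝ | ∃ T : DTree n, Computes T f ∧ avgCost T = c}

/-- Worst-case deterministic query complexity. -/
noncomputable def Dworst {n : ℕ} (f : (Fin n → Bool) → Bool) : ℕ :=
  sInf {d : ℕ | ∃ T : DTree n, Computes T f ∧ T.depth = d}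

/-- The weight of a boolean function: the number of inputs mapped to `true`. -/
def wt {n : ℕ} (f : (Fin n → Bool) → Bool) : ℕ :=
  (Finset.univ.filter fun x : Fin n → Bool => f x = true).card

/-- `S` is a certificate of `f` on input `x`. -/
def IsCert {n : ℕ} (f : (Fin n → Bool) → Bool) (x : Fin n → Bool) (S : Finset (Fin n)) : Prop :=
  ∀ y : Fin n → Bool, (∀ i ∈ S, y i = x i) → f y = f x

/-- Certificate complexity of `f` on input `x`. -/
noncomputable def certC {n : ℕ} (f : (Fin n → Bool) → Bool) (x : Fin n → Bool) : ℕ :=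
  sInf {k : ℕ | ∃ S : Finset (Fin n), IsCert f x S ∧ S.card = k}

/-- The weight of the subfunction `f|ρ`, where `ρ : Fin n → Option Bool` is a restriction:
the number of inputs consistent with `ρ` on which `f` outputs `true`. -/
def wtR {n : ℕ} (f : (Fin n → Bool) → Bool) (ρ : Fin n → Option Bool) : ℕ :=
  (Finset.univ.filter fun x : Fin n → Bool =>
    f x = true ∧ ∀ i : Fin n, ∀ b : Bool, ρ i = some b → x i = b).card

/-- Number of coordinates fixed by a restriction. -/
def suppCard {n : ℕ} (ρ : Fin n → Option Bool) : ℕ :=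
  (Finset.univ.filter fun i : Fin n => (ρ i).isSome).card

/-- The restriction given by the first `j` steps of a decision-tree path `L`. -/
def PathRho {n : ℕ} (L : List (Fin n × Bool)) (j : ℕ) : Fin n → Option Bool :=
  fun i => (L.take j).lookup i

/-- The path `L` is `δ`-parity with respect to `f`. -/
def DeltaParityPath {n : ℕ} (f : (Fin n → Bool) → Bool) (δ : ℝ)
    (L : List (Fin n × Bool)) : Prop :=
  ∀ j : ℕ, 1 ≤ j → j ≤ L.length →
    (1/2) * (1 - δ) * (wtR f (PathRho L (j-1)) : ℝ) ≤ (wtR f (PathRho L j) : ℝ) ∧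
    (wtR f (PathRho L j) : ℝ) ≤ (1/2) * (1 + δ) * (wtR f (PathRho L (j-1)) : ℝ)

/-- `f` is a `(t,δ)`-parity function: every path of length at most `t` is δ-parity. -/
def ParityFun {n : ℕ} (f : (Fin n → Bool) → Bool) (t : ℕ) (δ : ℝ) : Prop :=
  ∀ L : List (Fin n × Bool), (L.map Prod.fst).Nodup → L.length ≤ t → DeltaParityPath f δ L

/-- The subfunction `f|ρ`, viewed as a function on the full cube. -/
def restrictFun {n : ℕ} (f : (Fin n → Bool) → Bool) (ρ : Fin n → Option Bool) :
    (Fin n → Bool) → Bool :=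
  fun x => f fun i => (ρ i).getD (x i)

/-- Probability mass of the restriction `ρ` under the `p`-random restriction `R_p`. -/
noncomputable def rpMass {n : ℕ} (p : ℝ) (ρ : Fin n → Option Bool) : ℝ :=
  ∏ i : Fin n, if (ρ i).isSome then (1 - p) / 2 else p

/-- `f` is `λ`-critical. -/
def IsCritical {n : ℕ} (lam : ℝ) (f : (Fin n → Bool) → Bool) : Prop :=
  ∀ p : ℝ, 0 ≤ p → p ≤ 1 → ∀ t : ℕ,
    (∑ ρ : Fin n → Option Bool,
      if t ≤ Dworst (restrictFun f ρ) then rpMass p ρ else 0) ≤ (p * lam) ^ t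

section Aux

open Finset

/-! ### Decision tree helpers -/

lemma DTree.cost_le_depth {n : ℕ} (T : DTree n) (x : Fin n → Bool) : T.cost x ≤ T.depth := by
  induction T with
  | leaf b => simp [DTree.cost, DTree.depth]
  | node i t0 t1 ih0 ih1 =>
    simp only [DTree.cost, DTree.depth]
    by_cases h : x i <;> simp [h] <;> omega

/-- A full decision tree querying the variables in `L` in order. -/
def mkFull {n : ℕ} (f : (Fin n → Bool) → Bool) : List (Fin n) → DTree n
  | [] => .leaf (f fun _ => false)
  | i :: L => .node i (mkFull (fun x => f (Function.update x i false)) L)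
                      (mkFull (fun x => f (Function.update x i true)) L)

lemma mkFull_depth {n : ℕ} : ∀ (L : List (Fin n)) (f : (Fin n → Bool) → Bool),
    (mkFull f L).depth = L.length
  | [], f => rfl
  | i :: L, f => by
    simp [mkFull, DTree.depth, mkFull_depth L]
    omega

lemma mkFull_eval {n : ℕ} : ∀ (L : List (Fin n)) (f : (Fin n → Bool) → Bool),
    (∀ x y, (∀ i ∈ L, x i = y i) → f x = f y) → ∀ x, (mkFull f L).eval x = f x
  | [], f, h, x => h _ _ (by simp)
  | i :: L, f, h, x => by
    have hdep : ∀ b : Bool, ∀ z w : Fin n → Bool, (∀ j ∈ L, z j = w j) →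
        f (Function.update z i b) = f (Function.update w i b) := by
      intro b z w hzw
      refine h _ _ fun j hj => ?_
      by_cases hji : j = i
      · subst hji; simp
      · rw [Function.update_of_ne hji, Function.update_of_ne hji]
        exact hzw j ((List.mem_cons.1 hj).resolve_left hji)
    simp only [mkFull, DTree.eval]
    by_cases hx : x i
    · rw [if_pos hx, mkFull_eval L _ (hdep true)]
      have : Function.update x i true = x := by rw [← hx]; exact Function.update_eq_self i x
      rw [this]
    · rw [if_neg hx, mkFull_eval L _ (hdep false)]
      have hx' : x i = false := by simpa using hx
      rw [← hx', Function.update_eq_self]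

lemma exists_computes {n : ℕ} (f : (Fin n → Bool) → Bool) :
    ∃ T : DTree n, Computes T f ∧ T.depth = n := by
  refine ⟨mkFull f (List.finRange n), fun x => ?_, by rw [mkFull_depth]; simp⟩
  exact mkFull_eval _ f (fun x y hxy => by
    have : x = y := funext fun i => hxy i (List.mem_finRange i)
    rw [this]) x

lemma dworst_le {n : ℕ} (f : (Fin n → Bool) → Bool) : Dworst f ≤ n := by
  obtain ⟨T, hT, hd⟩ := exists_computes f
  exact Nat.sInf_le ⟨T, hT, hd⟩

lemma exists_opt {n : ℕ} (f : (Fin n → Bool) → Bool) :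
    ∃ T : DTree n, Computes T f ∧ T.depth = Dworst f := by
  have : Dworst f ∈ {d : ℕ | ∃ T : DTree n, Computes T f ∧ T.depth = d} := by
    apply Nat.sInf_mem
    obtain ⟨T, hT, hd⟩ := exists_computes f
    exact ⟨n, T, hT, hd⟩
  exact this

/-! ### Sum/product helpers -/

lemma sum_fun_prod {ι β : Type*} [Fintype ι] [DecidableEq ι] [Fintype β] [DecidableEq β]
    (w : ι → β → ℝ) : ∑ g : ι → β, ∏ i, w i (g i) = ∏ i, ∑ b, w i b := by
  rw [Finset.prod_univ_sum]
  rw [Fintype.piFinset_univ]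

lemma sum_comp_eq {ι β γ : Type*} [Fintype ι] [DecidableEq ι] [Fintype β] [DecidableEq β]
    [Fintype γ] [DecidableEq γ] (e : β → γ) (w' : β → ℝ) (w : γ → ℝ)
    (hw : ∀ c, ∑ b ∈ Finset.univ.filter (fun b => e b = c), w' b = w c)
    (A : (ι → γ) → ℝ) :
    ∑ y : ι → β, (∏ i, w' (y i)) * A (fun i => e (y i))
      = ∑ ρ : ι → γ, (∏ i, w (ρ i)) * A ρ := by
  rw [← Finset.sum_fiberwise Finset.univ (fun y : ι → β => (fun i => e (y i)))
        (fun y => (∏ i, w' (y i)) * A (fun i => e (y i)))]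
  refine Finset.sum_congr rfl fun ρ _ => ?_
  have hcg : ∀ y ∈ Finset.univ.filter (fun y : ι → β => (fun i => e (y i)) = ρ),
      (∏ i, w' (y i)) * A (fun i => e (y i)) = (∏ i, w' (y i)) * A ρ := by
    intro y hy
    simp only [Finset.mem_filter] at hy
    rw [hy.2]
  rw [Finset.sum_congr rfl hcg, ← Finset.sum_mul]
  congr 1
  have hfib : Finset.univ.filter (fun y : ι → β => (fun i => e (y i)) = ρ)
      = Fintype.piFinset (fun i => Finset.univ.filter fun b => e b = ρ i) := by
    ext y
    simp [Fintype.mem_piFinset, funext_iff]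
  rw [hfib, ← Finset.prod_univ_sum]
  exact Finset.prod_congr rfl fun i _ => hw (ρ i)

lemma rpMass_nonneg {n : ℕ} {p : ℝ} (hp0 : 0 ≤ p) (hp1 : p ≤ 1) (ρ : Fin n → Option Bool) :
    0 ≤ rpMass p ρ := by
  unfold rpMass
  exact Finset.prod_nonneg fun i _ => by split <;> linarith

/-! ### The tree built from a restriction-subset -/

def buildT {n : ℕ} (k : (Fin n → Option Bool) → DTree n) :
    List (Fin n) → (Fin n → Option Bool) → DTree n
  | [], ρ => k ρ
  | i :: L, ρ => .node i (buildT k L (Function.update ρ i (some false)))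
                         (buildT k L (Function.update ρ i (some true)))

def extR {n : ℕ} (L : List (Fin n)) (x : Fin n → Bool) (ρ : Fin n → Option Bool) :
    Fin n → Option Bool :=
  fun j => if j ∈ L then some (x j) else ρ j

lemma extR_nil {n : ℕ} (x : Fin n → Bool) (ρ : Fin n → Option Bool) : extR [] x ρ = ρ := by
  funext j; simp [extR]

lemma extR_cons {n : ℕ} (i : Fin n) (L : List (Fin n)) (x : Fin n → Bool)
    (ρ : Fin n → Option Bool) :
    extR (i :: L) x ρ = extR L x (Function.update ρ i (some (x i))) := by
  funext j
  simp only [extR, List.mem_cons]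
  by_cases hjL : j ∈ L
  · simp [hjL]
  · by_cases hji : j = i
    · subst hji; simp [hjL]
    · simp [hjL, hji, Function.update_of_ne hji]

lemma buildT_eval {n : ℕ} (k : (Fin n → Option Bool) → DTree n) :
    ∀ (L : List (Fin n)) (ρ : Fin n → Option Bool) (x : Fin n → Bool),
      (buildT k L ρ).eval x = (k (extR L x ρ)).eval x
  | [], ρ, x => by rw [extR_nil]; rfl
  | i :: L, ρ, x => by
    simp only [buildT, DTree.eval, extR_cons]
    by_cases hx : x i
    · rw [if_pos hx, hx, buildT_eval k L]
    · rw [if_neg hx, show x i = false by simpa using hx, buildT_eval k L]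

lemma buildT_cost {n : ℕ} (k : (Fin n → Option Bool) → DTree n) :
    ∀ (L : List (Fin n)) (ρ : Fin n → Option Bool) (x : Fin n → Bool),
      (buildT k L ρ).cost x = L.length + (k (extR L x ρ)).cost x
  | [], ρ, x => by rw [extR_nil]; simp [buildT]
  | i :: L, ρ, x => by
    simp only [buildT, DTree.cost, extR_cons, List.length_cons]
    by_cases hx : x i
    · rw [if_pos hx, hx, buildT_cost k L]; omega
    · rw [if_neg hx, show x i = false by simpa using hx, buildT_cost k L]; omega

/-- per-coordinate encoding of a restriction by (fixed?, value) -/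
def eBB : Bool × Bool → Option Bool := fun b => if b.1 then some b.2 else none

lemma sum_w' (p : ℝ) (c : Option Bool) :
    ∑ b ∈ Finset.univ.filter (fun b : Bool × Bool => eBB b = c),
        (if b.1 then (1 - p) / 2 else p / 2)
      = (if c.isSome then (1 - p) / 2 else p) := by
  rw [Finset.sum_filter, Fintype.sum_prod_type]
  rcases c with _ | v
  · simp [eBB, Fintype.sum_bool]
  · rcases v <;> simp [eBB, Fintype.sum_bool]

end Aux
section Aux2

open Finset

lemma sum_mass_supp {n : ℕ} (p : ℝ) :
    ∑ ρ : Fin n → Option Bool, rpMass p ρ * (suppCard ρ : ℝ) = n * (1 - p) := by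
  classical
  have hkey : ∀ i : Fin n,
      ∑ ρ : Fin n → Option Bool, rpMass p ρ * (if (ρ i).isSome then (1:ℝ) else 0) = 1 - p := by
    intro i
    have h1 : ∀ ρ : Fin n → Option Bool,
        rpMass p ρ * (if (ρ i).isSome then (1:ℝ) else 0)
          = ∏ j, ((if (ρ j).isSome then (1-p)/2 else p) *
              (if j = i then (if (ρ j).isSome then (1:ℝ) else 0) else 1)) := by
      intro ρ
      rw [Finset.prod_mul_distrib]
      congr 1
      rw [Finset.prod_ite_eq']
      simp
    rw [Finset.sum_congr rfl fun ρ _ => h1 ρ]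
    rw [sum_fun_prod (fun j (c : Option Bool) => (if c.isSome then (1-p)/2 else p) *
          (if j = i then (if c.isSome then (1:ℝ) else 0) else 1))]
    have h2 : ∀ j : Fin n, (∑ c : Option Bool,
        ((if c.isSome then (1-p)/2 else p) * (if j = i then (if c.isSome then (1:ℝ) else 0) else 1)))
          = if j = i then 1 - p else 1 := by
      intro j
      by_cases hji : j = i <;>
        simp [hji, Fintype.sum_option, Fintype.sum_bool] <;> ring
    rw [Finset.prod_congr rfl fun j _ => h2 j, Finset.prod_ite_eq']
    simp
  have hsupp : ∀ ρ : Fin n → Option Bool,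
      (suppCard ρ : ℝ) = ∑ i, (if (ρ i).isSome then (1:ℝ) else 0) := by
    intro ρ
    simp [suppCard, Finset.sum_boole]
  calc ∑ ρ : Fin n → Option Bool, rpMass p ρ * (suppCard ρ : ℝ)
      = ∑ ρ : Fin n → Option Bool, ∑ i, rpMass p ρ * (if (ρ i).isSome then (1:ℝ) else 0) := by
        refine Finset.sum_congr rfl fun ρ _ => ?_
        rw [hsupp, Finset.mul_sum]
    _ = ∑ i, ∑ ρ : Fin n → Option Bool, rpMass p ρ * (if (ρ i).isSome then (1:ℝ) else 0) :=
        Finset.sum_comm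
    _ = ∑ _i : Fin n, (1 - p) := Finset.sum_congr rfl fun i _ => hkey i
    _ = n * (1 - p) := by simp [mul_comm]; ring

lemma sum_mass_D {n : ℕ} (lam p : ℝ) (f : (Fin n → Bool) → Bool)
    (hc : IsCritical lam f) (hp0 : 0 ≤ p) (hp1 : p ≤ 1) :
    ∑ ρ : Fin n → Option Bool, rpMass p ρ * (Dworst (restrictFun f ρ) : ℝ)
      ≤ ∑ t ∈ Finset.Icc 1 n, (p * lam)^t := by
  classical
  have hrep : ∀ ρ : Fin n → Option Bool, rpMass p ρ * (Dworst (restrictFun f ρ) : ℝ)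
      = ∑ t ∈ Finset.Icc 1 n, (if t ≤ Dworst (restrictFun f ρ) then rpMass p ρ else 0) := by
    intro ρ
    have hD := dworst_le (restrictFun f ρ)
    rw [← Finset.sum_filter]
    have hfil : (Finset.Icc 1 n).filter (fun t => t ≤ Dworst (restrictFun f ρ))
        = Finset.Icc 1 (Dworst (restrictFun f ρ)) := by
      ext t
      simp only [Finset.mem_filter, Finset.mem_Icc]
      omega
    rw [hfil, Finset.sum_const, Nat.card_Icc]
    simp [nsmul_eq_mul, mul_comm]
  calc ∑ ρ : Fin n → Option Bool, rpMass p ρ * (Dworst (restrictFun f ρ) : ℝ)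
      = ∑ ρ : Fin n → Option Bool, ∑ t ∈ Finset.Icc 1 n,
          (if t ≤ Dworst (restrictFun f ρ) then rpMass p ρ else 0) :=
        Finset.sum_congr rfl fun ρ _ => hrep ρ
    _ = ∑ t ∈ Finset.Icc 1 n, ∑ ρ : Fin n → Option Bool,
          (if t ≤ Dworst (restrictFun f ρ) then rpMass p ρ else 0) := Finset.sum_comm
    _ ≤ ∑ t ∈ Finset.Icc 1 n, (p * lam)^t := Finset.sum_le_sum fun t _ => hc p hp0 hp1 t

/-- The number of fixed coordinates selected by `s`. -/
def cntS {n : ℕ} (s : Fin n → Bool) : ℕ := (Finset.univ.filter fun i => s i = true).card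

/-- The restriction fixing the coordinates selected by `s` to the values of `x`. -/
def rhoOf {n : ℕ} (s x : Fin n → Bool) : Fin n → Option Bool := fun i => eBB (s i, x i)

noncomputable def cS {n : ℕ} (f : (Fin n → Bool) → Bool) (s : Fin n → Bool) : ℝ :=
  (cntS s : ℝ) + (∑ x : Fin n → Bool, (Dworst (restrictFun f (rhoOf s x)) : ℝ)) / 2^n

noncomputable def PwS {n : ℕ} (p : ℝ) (s : Fin n → Bool) : ℝ :=
  ∏ i, (if s i then 1 - p else p)

lemma suppCard_rhoOf {n : ℕ} (s x : Fin n → Bool) : suppCard (rhoOf s x) = cntS s := by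
  unfold suppCard cntS rhoOf eBB
  congr 1
  ext i
  cases hsi : s i <;> simp [hsi]

lemma PwS_nonneg {n : ℕ} {p : ℝ} (hp0 : 0 ≤ p) (hp1 : p ≤ 1) (s : Fin n → Bool) :
    0 ≤ PwS p s := by
  unfold PwS
  exact Finset.prod_nonneg fun i _ => by split <;> linarith

lemma sum_PwS {n : ℕ} (p : ℝ) : ∑ s : Fin n → Bool, PwS p s = 1 := by
  unfold PwS
  rw [sum_fun_prod (fun _ (b : Bool) => if b then 1 - p else p)]
  simp [Fintype.sum_bool]

lemma X_eq_sum_cS {n : ℕ} (p : ℝ) (f : (Fin n → Bool) → Bool) :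
    ∑ ρ : Fin n → Option Bool,
        rpMass p ρ * ((suppCard ρ : ℝ) + (Dworst (restrictFun f ρ) : ℝ))
      = ∑ s : Fin n → Bool, PwS p s * cS f s := by
  classical
  have h2n : (0:ℝ) < 2^n := by positivity
  have htrans := sum_comp_eq (ι := Fin n) eBB (fun b => if b.1 then (1-p)/2 else p/2)
      (fun c => if c.isSome then (1-p)/2 else p) (sum_w' p)
      (fun ρ => (suppCard ρ : ℝ) + (Dworst (restrictFun f ρ) : ℝ))
  calc ∑ ρ : Fin n → Option Bool,
        rpMass p ρ * ((suppCard ρ : ℝ) + (Dworst (restrictFun f ρ) : ℝ))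
      = ∑ y : Fin n → Bool × Bool, (∏ i, (if (y i).1 then (1-p)/2 else p/2)) *
          ((suppCard (fun i => eBB (y i)) : ℝ)
            + (Dworst (restrictFun f (fun i => eBB (y i))) : ℝ)) := htrans.symm
    _ = ∑ sx : (Fin n → Bool) × (Fin n → Bool),
          (∏ i, (if sx.1 i then (1-p)/2 else p/2)) *
          ((suppCard (rhoOf sx.1 sx.2) : ℝ)
            + (Dworst (restrictFun f (rhoOf sx.1 sx.2)) : ℝ)) :=
        Fintype.sum_equiv (Equiv.arrowProdEquivProdArrow (Fin n) (fun _ => Bool) (fun _ => Bool)) _ _ (fun y => rfl)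
    _ = ∑ s : Fin n → Bool, ∑ x : Fin n → Bool,
          (∏ i, (if s i then (1-p)/2 else p/2)) *
          ((suppCard (rhoOf s x) : ℝ) + (Dworst (restrictFun f (rhoOf s x)) : ℝ)) :=
        Fintype.sum_prod_type _
    _ = ∑ s : Fin n → Bool, PwS p s * cS f s := by
        refine Finset.sum_congr rfl fun s _ => ?_
        have hfac : (∏ i, (if s i then (1-p)/2 else p/2)) = PwS p s * (1/2)^n := by
          unfold PwS
          calc ∏ i, (if s i then (1-p)/2 else p/2)
              = ∏ i, ((if s i then 1-p else p) * (1/2)) := by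
                refine Finset.prod_congr rfl fun i _ => ?_
                split <;> ring
            _ = (∏ i, (if s i then 1-p else p)) * (1/2)^n := by
                rw [Finset.prod_mul_distrib, Finset.prod_const, Finset.card_univ,
                  Fintype.card_fin]
        have hsum : ∑ x : Fin n → Bool,
            ((cntS s : ℝ) + (Dworst (restrictFun f (rhoOf s x)) : ℝ))
              = 2^n * (cntS s : ℝ)
                + ∑ x : Fin n → Bool, (Dworst (restrictFun f (rhoOf s x)) : ℝ) := by
          rw [Finset.sum_add_distrib, Finset.sum_const, Finset.card_univ, Fintype.card_fun]
          simp [nsmul_eq_mul]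
        calc ∑ x : Fin n → Bool,
            (∏ i, (if s i then (1-p)/2 else p/2)) *
              ((suppCard (rhoOf s x) : ℝ) + (Dworst (restrictFun f (rhoOf s x)) : ℝ))
            = ∑ x : Fin n → Bool, (PwS p s * (1/2)^n) *
              ((cntS s : ℝ) + (Dworst (restrictFun f (rhoOf s x)) : ℝ)) := by
              refine Finset.sum_congr rfl fun x _ => ?_
              rw [hfac, suppCard_rhoOf]
          _ = (PwS p s * (1/2)^n) *
              (2^n * (cntS s : ℝ)
                + ∑ x : Fin n → Bool, (Dworst (restrictFun f (rhoOf s x)) : ℝ)) := by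
              rw [← Finset.mul_sum, hsum]
          _ = PwS p s * cS f s := by
              unfold cS
              have h2n' : (2:ℝ)^n ≠ 0 := ne_of_gt h2n
              field_simp
              ring_nf
              have h12 : ((1:ℝ)/2)^n * 2^n = 1 := by rw [← mul_pow]; norm_num
              linear_combination (PwS p s * (cntS s : ℝ) * 2^n
                + PwS p s * ∑ x : Fin n → Bool, (Dworst (restrictFun f (rhoOf s x)) : ℝ)) * h12

end Aux2
theorem stmt13 (n : ℕ) (lam p : ℝ) (f : (Fin n → Bool) → Bool)
    (hc : IsCritical lam f) (hp0 : 0 ≤ p) (hp1 : p ≤ 1) :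
    ((∑ ρ : Fin n → Option Bool,
        rpMass p ρ * ((suppCard ρ : ℝ) + (Dworst (restrictFun f ρ) : ℝ)))
      ≤ n * (1 - p) + ∑ t ∈ Finset.Icc 1 n, (p * lam) ^ t) ∧
    (p * lam < 1 → Dave f ≤ n * (1 - p) + p * lam / (1 - p * lam)) := by
  classical
  have hsplit : ∑ ρ : Fin n → Option Bool,
        rpMass p ρ * ((suppCard ρ : ℝ) + (Dworst (restrictFun f ρ) : ℝ))
      = (∑ ρ : Fin n → Option Bool, rpMass p ρ * (suppCard ρ : ℝ))
        + ∑ ρ : Fin n → Option Bool, rpMass p ρ * (Dworst (restrictFun f ρ) : ℝ) := by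
    rw [← Finset.sum_add_distrib]
    exact Finset.sum_congr rfl fun ρ _ => by ring
  have part1 : ∑ ρ : Fin n → Option Bool,
        rpMass p ρ * ((suppCard ρ : ℝ) + (Dworst (restrictFun f ρ) : ℝ))
      ≤ n * (1 - p) + ∑ t ∈ Finset.Icc 1 n, (p * lam) ^ t := by
    rw [hsplit, sum_mass_supp]
    exact add_le_add_right (sum_mass_D lam p f hc hp0 hp1) _
  refine ⟨part1, fun hq1 => ?_⟩
  -- λ is nonnegative
  have hlam : 0 ≤ lam := by
    have h0 := hc 1 zero_le_one le_rfl 1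
    have hnn : (0:ℝ) ≤ ∑ ρ : Fin n → Option Bool,
        (if 1 ≤ Dworst (restrictFun f ρ) then rpMass 1 ρ else 0) :=
      Finset.sum_nonneg fun ρ _ => by
        split
        · exact rpMass_nonneg zero_le_one le_rfl ρ
        · exact le_rfl
    simp only [one_mul, pow_one] at h0
    linarith
  have hq0 : 0 ≤ p * lam := mul_nonneg hp0 hlam
  -- geometric series bound
  have hgeom : ∑ t ∈ Finset.Icc 1 n, (p * lam)^t ≤ p * lam / (1 - p * lam) := by
    set q := p * lam with hqdef
    have hq1' : (0:ℝ) < 1 - q := by linarith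
    have hins : Finset.range (n+1) = insert 0 (Finset.Icc 1 n) := by
      ext t
      simp only [Finset.mem_insert, Finset.mem_Icc, Finset.mem_range]
      omega
    have h2 : ∑ t ∈ Finset.range (n+1), q^t = 1 + ∑ t ∈ Finset.Icc 1 n, q^t := by
      rw [hins, Finset.sum_insert (by simp)]
      simp
    have h3 : ∑ t ∈ Finset.range (n+1), q^t ≤ 1/(1-q) := by
      rw [geom_sum_eq (by linarith : q ≠ 1)]
      have hnum : (q^(n+1) - 1)/(q - 1) = (1 - q^(n+1))/(1-q) := by
        rw [← neg_sub (1:ℝ) (q^(n+1)), ← neg_sub (1:ℝ) q, neg_div_neg_eq]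
      rw [hnum]
      have hpw : (0:ℝ) ≤ q^(n+1) := pow_nonneg hq0 _
      rw [div_le_div_iff₀ hq1' hq1']
      nlinarith
    have h4 : 1/(1-q) - 1 = q/(1-q) := by field_simp; ring
    linarith
  -- pick the best subset of coordinates
  obtain ⟨s0, -, hs0⟩ := Finset.exists_min_image (Finset.univ : Finset (Fin n → Bool))
    (cS f) Finset.univ_nonempty
  have hcs0 : cS f s0 ≤ ∑ ρ : Fin n → Option Bool,
      rpMass p ρ * ((suppCard ρ : ℝ) + (Dworst (restrictFun f ρ) : ℝ)) := by
    rw [X_eq_sum_cS]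
    calc cS f s0 = ∑ s : Fin n → Bool, PwS p s * cS f s0 := by
          rw [← Finset.sum_mul, sum_PwS, one_mul]
      _ ≤ ∑ s : Fin n → Bool, PwS p s * cS f s :=
          Finset.sum_le_sum fun s _ =>
            mul_le_mul_of_nonneg_left (hs0 s (Finset.mem_univ s)) (PwS_nonneg hp0 hp1 s)
  -- build the tree
  choose k hk1 hk2 using fun ρ : Fin n → Option Bool => exists_opt (restrictFun f ρ)
  set L := (Finset.univ.filter fun i => s0 i = true).toList with hLdef
  set T := buildT k L (fun _ => none) with hTdef
  have hLmem : ∀ j : Fin n, j ∈ L ↔ s0 j = true := by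
    intro j
    rw [hLdef]
    simp [Finset.mem_toList]
  have hrho : ∀ x : Fin n → Bool, extR L x (fun _ => none) = rhoOf s0 x := by
    intro x
    funext j
    unfold extR rhoOf eBB
    by_cases h : s0 j = true
    · rw [if_pos ((hLmem j).2 h)]
      simp [h]
    · rw [if_neg (fun hj => h ((hLmem j).1 hj))]
      rw [Bool.not_eq_true] at h
      simp [h]
  have hTcomp : Computes T f := by
    intro x
    rw [hTdef, buildT_eval, hrho, hk1 (rhoOf s0 x) x]
    unfold restrictFun rhoOf eBB
    congr 1
    funext i
    cases hsi : s0 i <;> simp [hsi]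
  have hLlen : L.length = cntS s0 := by
    rw [hLdef]
    exact Finset.length_toList _
  have hTcost : ∀ x : Fin n → Bool,
      (T.cost x : ℝ) ≤ (cntS s0 : ℝ) + (Dworst (restrictFun f (rhoOf s0 x)) : ℝ) := by
    intro x
    rw [hTdef, buildT_cost, hrho]
    push_cast
    have h1 := DTree.cost_le_depth (k (rhoOf s0 x)) x
    rw [hk2 (rhoOf s0 x)] at h1
    have h1' : ((k (rhoOf s0 x)).cost x : ℝ) ≤ (Dworst (restrictFun f (rhoOf s0 x)) : ℝ) := by
      exact_mod_cast h1
    have h2' : (L.length : ℝ) = (cntS s0 : ℝ) := by exact_mod_cast congrArg Nat.cast hLlen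
    linarith
  have h2n : (0:ℝ) < 2^n := by positivity
  have havg : avgCost T ≤ cS f s0 := by
    have hsum : ∑ x : Fin n → Bool, (T.cost x : ℝ)
        ≤ ∑ x : Fin n → Bool, ((cntS s0 : ℝ) + (Dworst (restrictFun f (rhoOf s0 x)) : ℝ)) :=
      Finset.sum_le_sum fun x _ => hTcost x
    have heq : ∑ x : Fin n → Bool, ((cntS s0 : ℝ) + (Dworst (restrictFun f (rhoOf s0 x)) : ℝ))
        = 2^n * (cntS s0 : ℝ)
          + ∑ x : Fin n → Bool, (Dworst (restrictFun f (rhoOf s0 x)) : ℝ) := by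
      rw [Finset.sum_add_distrib, Finset.sum_const, Finset.card_univ, Fintype.card_fun]
      simp [nsmul_eq_mul]
    calc avgCost T = (∑ x : Fin n → Bool, (T.cost x : ℝ))/2^n := rfl
      _ ≤ (2^n * (cntS s0 : ℝ)
            + ∑ x : Fin n → Bool, (Dworst (restrictFun f (rhoOf s0 x)) : ℝ))/2^n := by
          exact (div_le_div_iff_of_pos_right h2n).2 (hsum.trans_eq heq)
      _ = cS f s0 := by
          unfold cS
          field_simp
  have hbdd : BddBelow {c : ℝ | ∃ T : DTree n, Computes T f ∧ avgCost T = c} := by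
    refine ⟨0, ?_⟩
    rintro y ⟨T', -, rfl⟩
    exact div_nonneg (Finset.sum_nonneg fun x _ => Nat.cast_nonneg _) (by positivity)
  have hDave : Dave f ≤ avgCost T := csInf_le hbdd ⟨T, hTcomp, rfl⟩
  calc Dave f ≤ avgCost T := hDave
    _ ≤ cS f s0 := havg
    _ ≤ ∑ ρ : Fin n → Option Bool,
        rpMass p ρ * ((suppCard ρ : ℝ) + (Dworst (restrictFun f ρ) : ℝ)) := hcs0
    _ ≤ n * (1 - p) + ∑ t ∈ Finset.Icc 1 n, (p * lam) ^ t := part1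
    _ ≤ n * (1 - p) + p * lam / (1 - p * lam) := by linarith
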